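/- Asymptotic revenue rate under fixed uniform pricing: suppose the family of interarrival distributions satisfies lim_{λ→∞} λ·(1 − φ_λ(μ)) = μ̃ for some finite μ̃ ≥ 0. Then for any fixed uniform price p with Ḡ(p) > 0, the mean revenue rate of the K-server system satisfies lim_{λ→∞} R_λ(K, p·1) = μ̃·p·K. -/

import Mathlib

open MeasureTheory Filter

/-- Asymptotic revenue rate under fixed uniform pricing: if
`lim_{λ→∞} λ(1 − φ_λ(μ)) = μ̃` for some finite `μ̃ ≥ 0`, then for any fixed
uniform price `p` with `Ḡ(p) > 0`, the mean revenue rate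
`R_λ(K, p·1) = λ·p·Ḡ(p)·(1 - π_K(p; λ))` satisfies
`lim_{λ→∞} R_λ(K, p·1) = μ̃·p·K`. -/
theorem stmt_12 {Ω : Type*} [MeasurableSpace Ω] (P : Measure Ω)
    [IsProbabilityMeasure P]
    (μ : ℝ) (hμ : 0 < μ)
    (G : ℝ → ℝ) (hG0 : ∀ u, 0 ≤ G u) (hG1 : ∀ u, G u ≤ 1) (hGanti : Antitone G)
    (U : ℝ → Ω → ℝ)
    (hU : ∀ l : ℝ, 0 < l → (∀ ω, 0 ≤ U l ω) ∧ Measurable (U l) ∧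
      Integrable (U l) P ∧ ∫ ω, U l ω ∂P = 1 / l)
    (φ : ℝ → ℝ → ℝ) (hφ : ∀ l s : ℝ, φ l s = ∫ ω, Real.exp (-s * U l ω) ∂P)
    (β : ℝ → ℕ → ℝ)
    (hβ : ∀ (l : ℝ) (j : ℕ),
      β l j = ∏ i ∈ Finset.Icc 1 j, (1 - φ l (i * μ)) / φ l (i * μ))
    (K : ℕ) (hK : 1 ≤ K)
    (p : ℝ) (hp : 0 ≤ p) (hGp : 0 < G p)
    (πb : ℝ → ℝ)
    (hπ : ∀ l : ℝ,
      πb l = (∑ j ∈ Finset.range (K + 1), (K.choose j : ℝ) * (G p)⁻¹ ^ j * β l j)⁻¹)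
    (R : ℝ → ℝ) (hR : ∀ l : ℝ, R l = l * p * G p * (1 - πb l))
    (mt : ℝ) (hmt : 0 ≤ mt)
    (hlim : Tendsto (fun l : ℝ => l * (1 - φ l μ)) atTop (nhds mt)) :
    Tendsto R atTop (nhds (mt * p * K)) := by
  -- measurability and integrability of the Laplace kernels
  have hexp_meas : ∀ l : ℝ, 0 < l → ∀ s : ℝ,
      Measurable (fun ω => Real.exp (-s * U l ω)) := fun l hl s =>
    Real.measurable_exp.comp ((hU l hl).2.1.const_mul _)
  have hexp_int : ∀ l : ℝ, 0 < l → ∀ s : ℝ, 0 ≤ s →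
      Integrable (fun ω => Real.exp (-s * U l ω)) P := by
    intro l hl s hs
    refine (integrable_const (1 : ℝ)).mono'
      ((hexp_meas l hl s).aestronglyMeasurable) ?_
    filter_upwards with ω
    rw [Real.norm_eq_abs, abs_of_pos (Real.exp_pos _)]
    exact Real.exp_le_one_iff.mpr (by nlinarith [(hU l hl).1 ω])
  -- φ l s ≤ 1 for s ≥ 0
  have hφle : ∀ l : ℝ, 0 < l → ∀ s : ℝ, 0 ≤ s → φ l s ≤ 1 := by
    intro l hl s hs
    rw [hφ]
    calc ∫ ω, Real.exp (-s * U l ω) ∂P ≤ ∫ _, (1 : ℝ) ∂P :=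
          integral_mono (hexp_int l hl s hs) (integrable_const 1)
            (fun ω => Real.exp_le_one_iff.mpr (by nlinarith [(hU l hl).1 ω]))
      _ = 1 := by simp
  -- Bernoulli-type lower bound : 1 - m (1 - φ l μ) ≤ φ l (m μ)
  have hbern : ∀ l : ℝ, 0 < l → ∀ m : ℕ,
      1 - (m : ℝ) * (1 - φ l μ) ≤ φ l ((m : ℝ) * μ) := by
    intro l hl m
    have key : ∀ ω, 1 + (m : ℝ) * (Real.exp (-μ * U l ω) - 1)
        ≤ Real.exp (-((m : ℝ) * μ) * U l ω) := by
      intro ω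
      have hx : Real.exp (-((m : ℝ) * μ) * U l ω)
          = (Real.exp (-μ * U l ω)) ^ m := by
        rw [← Real.exp_nat_mul]; ring_nf
      rw [hx]
      have hb := one_add_mul_le_pow
        (a := Real.exp (-μ * U l ω) - 1)
        (by nlinarith [Real.exp_pos (-μ * U l ω)]) m
      simpa using hb
    have hint1 : Integrable (fun ω => 1 + (m : ℝ) * (Real.exp (-μ * U l ω) - 1)) P :=
      (integrable_const 1).add
        (((hexp_int l hl μ hμ.le).sub (integrable_const 1)).const_mul _)
    have h1 := integral_mono hint1
      (hexp_int l hl ((m : ℝ) * μ) (by positivity)) key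
    have h2 : ∫ ω, (1 + (m : ℝ) * (Real.exp (-μ * U l ω) - 1)) ∂P
        = 1 + (m : ℝ) * (φ l μ - 1) := by
      have e1 : ∀ ω, 1 + (m : ℝ) * (Real.exp (-μ * U l ω) - 1)
          = (1 - (m : ℝ)) + (m : ℝ) * Real.exp (-μ * U l ω) := fun ω => by ring
      simp_rw [e1]
      rw [integral_add (integrable_const _) ((hexp_int l hl μ hμ.le).const_mul _),
        integral_const_mul, integral_const, hφ]
      simp [measure_univ]
      ring
    rw [h2] at h1
    rw [← hφ l ((m : ℝ) * μ)] at h1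
    linarith
  -- 1 - φ l μ → 0
  have h1mφ : Tendsto (fun l : ℝ => 1 - φ l μ) atTop (nhds 0) := by
    have h := hlim.mul tendsto_inv_atTop_zero
    rw [mul_zero] at h
    refine h.congr' ?_
    filter_upwards [eventually_gt_atTop (0 : ℝ)] with l hl
    rw [mul_comm l (1 - φ l μ), mul_assoc, mul_inv_cancel₀ hl.ne', mul_one]
  -- φ l (m μ) → 1
  have hφto1 : ∀ m : ℕ, Tendsto (fun l : ℝ => φ l ((m : ℝ) * μ)) atTop (nhds 1) := by
    intro m
    have hlo : Tendsto (fun l : ℝ => 1 - (m : ℝ) * (1 - φ l μ)) atTop (nhds 1) := by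
      have h := (tendsto_const_nhds (x := (1 : ℝ)) (f := atTop)).sub
        ((tendsto_const_nhds (x := (m : ℝ)) (f := atTop)).mul h1mφ)
      simpa using h
    refine tendsto_of_tendsto_of_tendsto_of_le_of_le' hlo tendsto_const_nhds ?_ ?_
    · filter_upwards [eventually_gt_atTop (0 : ℝ)] with l hl
      exact hbern l hl m
    · filter_upwards [eventually_gt_atTop (0 : ℝ)] with l hl
      exact hφle l hl _ (by positivity)
  have hφμ1 : Tendsto (fun l : ℝ => φ l μ) atTop (nhds 1) := by
    simpa using hφto1 1
  -- each ratio (1 - φ l (i μ))/φ l (i μ) → 0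
  have hrat : ∀ m : ℕ, Tendsto
      (fun l : ℝ => (1 - φ l ((m : ℝ) * μ)) / φ l ((m : ℝ) * μ)) atTop (nhds 0) := by
    intro m
    have hnum : Tendsto (fun l : ℝ => 1 - φ l ((m : ℝ) * μ)) atTop (nhds 0) := by
      have h := (tendsto_const_nhds (x := (1 : ℝ)) (f := atTop)).sub (hφto1 m)
      simpa using h
    have h := hnum.div (hφto1 m) one_ne_zero
    simpa [Pi.div_def] using h
  -- l * β l j → (if j = 1 then mt else 0) for j ≥ 1
  have hlβ : ∀ j : ℕ, 1 ≤ j → Tendsto (fun l : ℝ => l * β l j) atTop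
      (nhds (if j = 1 then mt else 0)) := by
    intro j hj
    have hpeel : ∀ l : ℝ, l * β l j =
        (l * (1 - φ l μ)) / φ l μ *
          ∏ i ∈ Finset.Ico 2 (j + 1), (1 - φ l ((i : ℝ) * μ)) / φ l ((i : ℝ) * μ) := by
      intro l
      rw [hβ, show Finset.Icc 1 j = Finset.Ico 1 (j + 1) from
        (by rw [Finset.Ico_add_one_right_eq_Icc]),
        Finset.prod_eq_prod_Ico_succ_bot (by omega)]
      simp only [Nat.cast_one, one_mul]
      ring
    have hprod : Tendsto
        (fun l : ℝ => ∏ i ∈ Finset.Ico 2 (j + 1),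
          (1 - φ l ((i : ℝ) * μ)) / φ l ((i : ℝ) * μ)) atTop
        (nhds (∏ _i ∈ Finset.Ico 2 (j + 1), (0 : ℝ))) :=
      tendsto_finset_prod _ (fun i _ => hrat i)
    have hmain := (hlim.div hφμ1 one_ne_zero).mul hprod
    have hval : mt / 1 * (∏ _i ∈ Finset.Ico 2 (j + 1), (0 : ℝ)) =
        if j = 1 then mt else 0 := by
      rcases eq_or_lt_of_le hj with h1 | h2
      · rw [← h1]; simp
      · have hne : (Finset.Ico 2 (j + 1)).Nonempty := by
          refine ⟨2, ?_⟩; simp [Finset.mem_Ico]; omega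
        rw [Finset.prod_const, zero_pow (Finset.card_ne_zero.mpr hne),
          if_neg (by omega)]
        ring
    rw [hval] at hmain
    exact hmain.congr (fun l => (hpeel l).symm)
  -- the normalizing sum
  set S : ℝ → ℝ := fun l =>
    ∑ j ∈ Finset.range (K + 1), (K.choose j : ℝ) * (G p)⁻¹ ^ j * β l j with hSdef
  have hπ' : ∀ l : ℝ, πb l = (S l)⁻¹ := hπ
  have hβ0 : ∀ l : ℝ, β l 0 = 1 := by intro l; rw [hβ]; simp
  have hsplit : ∀ l : ℝ, S l = 1 +
      ∑ j ∈ Finset.Ico 1 (K + 1), (K.choose j : ℝ) * (G p)⁻¹ ^ j * β l j := by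
    intro l
    show (∑ j ∈ Finset.range (K + 1), (K.choose j : ℝ) * (G p)⁻¹ ^ j * β l j)
      = _
    rw [Finset.range_eq_Ico, Finset.sum_eq_sum_Ico_succ_bot
      (show 0 < K + 1 by omega)
      (fun j => (K.choose j : ℝ) * (G p)⁻¹ ^ j * β l j)]
    congr 1
    simp [hβ0 l]
  -- l * (S l - 1) converges
  have hT : Tendsto (fun l : ℝ =>
      l * ∑ j ∈ Finset.Ico 1 (K + 1), (K.choose j : ℝ) * (G p)⁻¹ ^ j * β l j)
      atTop (nhds ((K : ℝ) * (G p)⁻¹ * mt)) := by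
    have heq : ∀ l : ℝ,
        l * ∑ j ∈ Finset.Ico 1 (K + 1), (K.choose j : ℝ) * (G p)⁻¹ ^ j * β l j
        = ∑ j ∈ Finset.Ico 1 (K + 1),
            (K.choose j : ℝ) * (G p)⁻¹ ^ j * (l * β l j) := by
      intro l
      rw [Finset.mul_sum]
      exact Finset.sum_congr rfl (fun j _ => by ring)
    have hsum : Tendsto (fun l : ℝ => ∑ j ∈ Finset.Ico 1 (K + 1),
        (K.choose j : ℝ) * (G p)⁻¹ ^ j * (l * β l j)) atTop
        (nhds (∑ j ∈ Finset.Ico 1 (K + 1),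
          (K.choose j : ℝ) * (G p)⁻¹ ^ j * (if j = 1 then mt else 0))) := by
      refine tendsto_finset_sum _ (fun j hj => ?_)
      have hj1 : 1 ≤ j := (Finset.mem_Ico.mp hj).1
      exact tendsto_const_nhds.mul (hlβ j hj1)
    have hval : (∑ j ∈ Finset.Ico 1 (K + 1),
        (K.choose j : ℝ) * (G p)⁻¹ ^ j * (if j = 1 then mt else 0))
        = (K : ℝ) * (G p)⁻¹ * mt := by
      simp only [mul_ite, mul_zero]
      rw [Finset.sum_ite_eq' (Finset.Ico 1 (K + 1)) 1
        (fun j => (K.choose j : ℝ) * (G p)⁻¹ ^ j * mt)]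
      rw [if_pos (by simp [Finset.mem_Ico]; omega)]
      simp [Nat.choose_one_right]
    rw [hval] at hsum
    exact hsum.congr (fun l => (heq l).symm)
  -- S l → 1
  have hSto1 : Tendsto S atTop (nhds 1) := by
    have hTto0 : Tendsto (fun l : ℝ =>
        ∑ j ∈ Finset.Ico 1 (K + 1), (K.choose j : ℝ) * (G p)⁻¹ ^ j * β l j)
        atTop (nhds 0) := by
      have h := tendsto_inv_atTop_zero.mul hT
      rw [zero_mul] at h
      refine h.congr' ?_
      filter_upwards [eventually_gt_atTop (0 : ℝ)] with l hl
      rw [← mul_assoc, inv_mul_cancel₀ hl.ne', one_mul]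
    have h := (tendsto_const_nhds (x := (1 : ℝ)) (f := atTop)).add hTto0
    rw [add_zero] at h
    exact h.congr (fun l => (hsplit l).symm)
  -- eventually S l > 1/2
  have hSev : ∀ᶠ l in atTop, (1 : ℝ) / 2 < S l :=
    hSto1.eventually (eventually_gt_nhds (by norm_num))
  -- final assembly
  have hfinal : Tendsto (fun l : ℝ => p * G p *
      (l * ∑ j ∈ Finset.Ico 1 (K + 1), (K.choose j : ℝ) * (G p)⁻¹ ^ j * β l j)
      / S l) atTop (nhds (p * G p * ((K : ℝ) * (G p)⁻¹ * mt) / 1)) :=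
    (tendsto_const_nhds.mul hT).div hSto1 one_ne_zero
  have hconst : p * G p * ((K : ℝ) * (G p)⁻¹ * mt) / 1 = mt * p * K := by
    field_simp
  rw [hconst] at hfinal
  refine hfinal.congr' ?_
  filter_upwards [hSev] with l hSl
  have hSne : S l ≠ 0 := by positivity
  rw [hR, hπ', hsplit l]
  have hT1 : (∑ j ∈ Finset.Ico 1 (K + 1), (K.choose j : ℝ) * (G p)⁻¹ ^ j * β l j)
      = S l - 1 := by rw [hsplit l]; ring
  rw [hT1]
  field_simp
  rw [show (1 : ℝ) + (S l - 1) = S l by ring, one_sub_div hSne]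
  ring
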